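/- Let f = X^4 - a1*X^3 + (4 + a2)*X^2 - 2*a1*X + 4 with integers a1, a2. If x is a root of f with all complex absolute values equal to sqrt(2) and f is irreducible over Q, then beta = x + 2/x satisfies beta^2 = a1*beta - a2 and the real quadratic integer beta satisfies a1^2 - 4*a2 > 0 and (a1 pm sqrt(a1^2-4a2))^2 < 8 for both sign choices; in particular |a1| <= 3 and -7 <= a2 <= 1. -/

import Mathlib

open Polynomial

lemma weil_no_rat_quadratic (a1 a2 : ℤ)
    (hirr : Irreducible
      ((X : Polynomial ℚ) ^ 4 - C (a1 : ℚ) * X ^ 3 + C ((4 + a2 : ℤ) : ℚ) * X ^ 2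
        - C ((2 * a1 : ℤ) : ℚ) * X + C 4))
    (z : ℂ)
    (hz : z ^ 4 - (a1 : ℂ) * z ^ 3 + ((4 + a2 : ℤ) : ℂ) * z ^ 2
        - ((2 * a1 : ℤ) : ℂ) * z + 4 = 0)
    (b c : ℚ) (hq : z ^ 2 + (b : ℂ) * z + (c : ℂ) = 0) : False := by
  set f : Polynomial ℚ := X ^ 4 - C (a1 : ℚ) * X ^ 3 + C ((4 + a2 : ℤ) : ℚ) * X ^ 2
        - C ((2 * a1 : ℤ) : ℚ) * X + C 4 with hf
  have hfz : aeval z f = 0 := by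
    simp only [hf, map_add, map_sub, map_mul, map_pow, aeval_X, aeval_C, eq_ratCast]
    push_cast
    push_cast at hz
    linear_combination hz
  have hfdeg : f.natDegree = 4 := by
    rw [hf]; compute_degree!
  have hint : IsIntegral ℚ z := (IsAlgebraic.isIntegral ⟨f, hirr.ne_zero, hfz⟩)
  have hmin : Associated (minpoly ℚ z) f :=
    (minpoly.irreducible hint).associated_of_dvd hirr (minpoly.dvd ℚ z hfz)
  have hdeg4 : (minpoly ℚ z).natDegree = 4 := by
    rw [Polynomial.natDegree_eq_of_degree_eq (degree_eq_degree_of_associated hmin), hfdeg]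
  set q : Polynomial ℚ := X ^ 2 + C b * X + C c with hqdef
  have hqdeg : q.natDegree = 2 := by rw [hqdef]; compute_degree!
  have hqz : aeval z q = 0 := by
    simp only [hqdef, map_add, map_mul, map_pow, aeval_X, aeval_C, eq_ratCast]
    exact hq
  have hle : (minpoly ℚ z).natDegree ≤ 2 := by
    have hq0 : q ≠ 0 := fun h => by simp [h] at hqdeg
    calc (minpoly ℚ z).natDegree ≤ q.natDegree := natDegree_le_of_dvd (minpoly.dvd ℚ z hqz) hq0
    _ = 2 := hqdeg
  omega

set_option maxHeartbeats 1600000 in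
theorem weil_two_number_quartic_coefficient_bounds
    (a1 a2 : ℤ)
    (hirr : Irreducible
      ((X : Polynomial ℚ) ^ 4 - C (a1 : ℚ) * X ^ 3 + C ((4 + a2 : ℤ) : ℚ) * X ^ 2
        - C ((2 * a1 : ℤ) : ℚ) * X + C 4))
    (x : ℂ)
    (hx : x ^ 4 - (a1 : ℂ) * x ^ 3 + ((4 + a2 : ℤ) : ℂ) * x ^ 2
        - ((2 * a1 : ℤ) : ℂ) * x + 4 = 0)
    (hweil : ∀ z : ℂ,
      z ^ 4 - (a1 : ℂ) * z ^ 3 + ((4 + a2 : ℤ) : ℂ) * z ^ 2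
        - ((2 * a1 : ℤ) : ℂ) * z + 4 = 0 → ‖z‖ = Real.sqrt 2) :
    (x + 2 / x) ^ 2 = (a1 : ℂ) * (x + 2 / x) - (a2 : ℂ) ∧
    (0 : ℝ) < (a1 : ℝ) ^ 2 - 4 * (a2 : ℝ) ∧
    (((a1 : ℝ) + Real.sqrt ((a1 : ℝ) ^ 2 - 4 * (a2 : ℝ))) / 2) ^ 2 < 8 ∧
    (((a1 : ℝ) - Real.sqrt ((a1 : ℝ) ^ 2 - 4 * (a2 : ℝ))) / 2) ^ 2 < 8 ∧
    |a1| ≤ 3 ∧ -7 ≤ a2 ∧ a2 ≤ 1 := by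
  have key := weil_no_rat_quadratic a1 a2 hirr
  have hx0 : x ≠ 0 := by
    intro h; rw [h] at hx; norm_num at hx
  -- β equation
  have hbeta : (x + 2 / x) ^ 2 = (a1 : ℂ) * (x + 2 / x) - (a2 : ℂ) := by
    field_simp
    push_cast at hx ⊢
    linear_combination hx
  -- |x| = √2, so 2/x = conj x and β is real
  have habs := hweil x hx
  have hns : Complex.normSq x = 2 := by
    rw [← Complex.sq_norm, habs, Real.sq_sqrt (by norm_num : (0:ℝ) ≤ 2)]
  have hconj : x * (starRingEnd ℂ) x = 2 := by
    rw [Complex.mul_conj, hns]; norm_num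
  have hdiv : 2 / x = (starRingEnd ℂ) x := by
    rw [div_eq_iff hx0, mul_comm]; exact hconj.symm
  have hxr : x + 2 / x = ((2 * x.re : ℝ) : ℂ) := by
    rw [hdiv, Complex.add_conj]
  set r : ℝ := 2 * x.re with hrdef
  have hrq : r ^ 2 = (a1 : ℝ) * r - (a2 : ℝ) := by
    have h := hbeta
    rw [hxr] at h
    exact_mod_cast h
  have hD0 : (0:ℝ) ≤ (a1 : ℝ) ^ 2 - 4 * (a2 : ℝ) := by nlinarith [sq_nonneg (2*r - (a1:ℝ))]
  -- discriminant positive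
  have hDpos : (0:ℝ) < (a1 : ℝ) ^ 2 - 4 * (a2 : ℝ) := by
    rcases hD0.lt_or_eq with h | h
    · exact h
    · exfalso
      have hr2 : (2*r - (a1:ℝ))^2 = 0 := by nlinarith
      have hra : r = (a1:ℝ)/2 := by
        have := pow_eq_zero_iff (n := 2) (by norm_num) |>.mp hr2
        linarith
      refine key x hx (-(a1:ℚ)/2) 2 ?_
      have hxx : x * (x + 2/x) = x^2 + 2 := by field_simp
      have hxc : x + 2/x = (a1:ℂ)/2 := by
        rw [hxr, hra]; push_cast; ring
      push_cast
      linear_combination -hxx + x * hxc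
  set s : ℝ := Real.sqrt ((a1 : ℝ) ^ 2 - 4 * (a2 : ℝ)) with hsdef
  have hs2 : s ^ 2 = (a1 : ℝ) ^ 2 - 4 * (a2 : ℝ) := Real.sq_sqrt hD0
  have hs0 : 0 ≤ s := Real.sqrt_nonneg _
  -- the main bound: any real γ with γ+γ' = a1, γγ' = a2 satisfies γ² < 8
  have main : ∀ γ γ' : ℝ, γ + γ' = (a1:ℝ) → γ * γ' = (a2:ℝ) → γ^2 < 8 := by
    intro γ γ' hsum hprod
    by_contra hcon
    push_neg at hcon
    set t : ℝ := Real.sqrt (γ^2 - 8) with htdef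
    have ht2 : t^2 = γ^2 - 8 := Real.sq_sqrt (by linarith)
    set z : ℝ := (γ + t)/2 with hzdef
    have hzq : z^2 - γ*z + 2 = 0 := by
      rw [hzdef]; linear_combination ht2/4
    have hR : z^4 - (a1:ℝ)*z^3 + (4+(a2:ℝ))*z^2 - 2*(a1:ℝ)*z + 4 = 0 := by
      rw [← hsum, ← hprod]
      linear_combination (z^2 - γ'*z + 2) * hzq
    have hfz : (z:ℂ) ^ 4 - (a1 : ℂ) * (z:ℂ) ^ 3 + ((4 + a2 : ℤ) : ℂ) * (z:ℂ) ^ 2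
        - ((2 * a1 : ℤ) : ℂ) * (z:ℂ) + 4 = 0 := by
      have hRc := congrArg (fun y : ℝ => (y:ℂ)) hR
      push_cast at hRc ⊢
      linear_combination hRc
    have habz := hweil _ hfz
    rw [Complex.norm_real, Real.norm_eq_abs] at habz
    have hz2 : z^2 = 2 := by
      have h1 : |z|^2 = Real.sqrt 2 ^ 2 := by rw [habz]
      rw [sq_abs, Real.sq_sqrt (by norm_num : (0:ℝ) ≤ 2)] at h1
      exact h1
    refine key _ hfz 0 (-2) ?_
    have : (z:ℂ)^2 = 2 := by exact_mod_cast congrArg (fun y : ℝ => (y:ℂ)) hz2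
    push_cast
    linear_combination this
  have hprodp : ((a1:ℝ)+s)/2 * (((a1:ℝ)-s)/2) = (a2:ℝ) := by
    linear_combination (-1/4 : ℝ) * hs2
  have hgp : (((a1:ℝ) + s)/2)^2 < 8 := main _ _ (by ring) hprodp
  have hgm : (((a1:ℝ) - s)/2)^2 < 8 :=
    main (((a1:ℝ) - s)/2) (((a1:ℝ) + s)/2) (by ring) (by linear_combination hprodp)
  -- integer bounds
  have hDz : 1 ≤ a1^2 - 4*a2 := by
    have h : (0:ℝ) < ((a1^2 - 4*a2 : ℤ) : ℝ) := by push_cast; linarith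
    have h2 : (0:ℤ) < a1^2 - 4*a2 := by exact_mod_cast h
    omega
  have hs1 : 1 ≤ s := by
    have h1 : ((1:ℤ):ℝ) ≤ ((a1^2 - 4*a2 : ℤ):ℝ) := by exact_mod_cast hDz
    push_cast at h1
    nlinarith [hs2, hs0]
  have h32p : ((a1:ℝ) + s)^2 < 32 := by nlinarith [hgp]
  have h32m : ((a1:ℝ) - s)^2 < 32 := by nlinarith [hgm]
  have habs1 : |a1| ≤ 3 := by
    by_contra hcon
    push_neg at hcon
    have h4 : 4 ≤ |a1| := hcon
    have h4' : 4 ≤ a1 ∨ a1 ≤ -4 := by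
      rcases abs_cases a1 with ⟨he, _⟩ | ⟨he, _⟩
      · left; rw [he] at h4; exact h4
      · right; rw [he] at h4; omega
    rcases Int.even_or_odd a1 with ⟨k, hk⟩ | ⟨k, hk⟩
    · have hD4 : (4:ℤ) ≤ a1^2 - 4*a2 := by
        have h44 : a1^2 - 4*a2 = 4*(k^2 - a2) := by rw [hk]; ring
        omega
      have hD4' : (4:ℝ) ≤ (a1:ℝ)^2 - 4*(a2:ℝ) := by
        have := (by exact_mod_cast hD4 : ((4:ℤ):ℝ) ≤ ((a1^2 - 4*a2 : ℤ):ℝ))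
        push_cast at this; linarith
      have hsge2 : 2 ≤ s := by nlinarith [hs2, hs0]
      rcases h4' with h | h
      · have ha : (4:ℝ) ≤ (a1:ℝ) := by exact_mod_cast h
        nlinarith [h32p]
      · have ha : (a1:ℝ) ≤ -4 := by exact_mod_cast h
        nlinarith [h32m]
    · have h5' : 5 ≤ a1 ∨ a1 ≤ -5 := by omega
      rcases h5' with h | h
      · have ha : (5:ℝ) ≤ (a1:ℝ) := by exact_mod_cast h
        nlinarith [h32p, hs1]
      · have ha : (a1:ℝ) ≤ -5 := by exact_mod_cast h
        nlinarith [h32m, hs1]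
  have ha2sq : (a2:ℝ)^2 < 64 := by
    have hrw : (a2:ℝ)^2 = (((a1:ℝ)+s)/2)^2 * ((((a1:ℝ)-s)/2)^2) := by
      rw [← hprodp]; ring
    rw [hrw]
    nlinarith [hgp, hgm, sq_nonneg (((a1:ℝ)+s)/2), sq_nonneg (((a1:ℝ)-s)/2)]
  have ha2low : -7 ≤ a2 := by
    by_contra hcon
    push_neg at hcon
    have h8 : a2 ≤ -8 := by omega
    have : (a2:ℝ) ≤ -8 := by exact_mod_cast h8
    nlinarith
  have ha2up : a2 ≤ 1 := by
    by_contra hcon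
    push_neg at hcon
    have ha22 : 2 ≤ a2 := hcon
    have ha1sq : a1^2 ≤ 9 := by
      rcases abs_le.mp habs1 with ⟨h1, h2⟩
      nlinarith
    have ha2 : a2 = 2 := by omega
    have ha1 : a1 = 3 ∨ a1 = -3 := by
      rcases abs_le.mp habs1 with ⟨h1, h2⟩
      have h9 : 9 ≤ a1^2 := by omega
      interval_cases a1 <;> omega
    subst ha2
    rcases ha1 with ha1 | ha1 <;> subst ha1
    · refine weil_no_rat_quadratic 3 2 hirr (1 + Complex.I) ?_ (-2) 2 ?_
      · push_cast
        linear_combination (Complex.I^2 + Complex.I + 2) * Complex.I_sq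
      · push_cast
        linear_combination Complex.I_sq
    · refine weil_no_rat_quadratic (-3) 2 hirr (-1 + Complex.I) ?_ 2 2 ?_
      · push_cast
        linear_combination (Complex.I^2 - Complex.I + 2) * Complex.I_sq
      · push_cast
        linear_combination Complex.I_sq
  exact ⟨hbeta, hDpos, hgp, hgm, habs1, ha2low, ha2up⟩
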